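/- arXiv:2508.02943 — 3 statements merged into one kernel-verified Lean document; each statement's English description precedes it below -/
import Mathlib

section
/- Let R be a seminormed commutative ring and s ∈ R. Suppose b₁ + a₁·s = m₁ + e₁ and b₂ + a₂·s = m₂ + e₂ with ‖e₁‖ ≤ B₁, ‖e₂‖ ≤ B₂, ‖m₁‖ ≤ B, ‖m₂‖ ≤ B, and suppose b₀ + a₀·s = s² + e_ev with ‖e_ev‖ ≤ E and ‖a₁·a₂‖ ≤ D, for nonnegative reals B₁, B₂, B, D, E. Define w = (b₁·b₂ + (a₁·a₂)·b₀) + (a₁·b₂ + a₂·b₁ + (a₁·a₂)·a₀)·s. Then w = m₁·m₂ + e_mult where e_mult = m₁·e₂ + m₂·e₁ + e₁·e₂ + (a₁·a₂)·e_ev, and ‖e_mult‖ ≤ B·B₂ + B·B₁ + B₁·B₂ + D·E. -/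
/-- Multiplication noise bound for Binary CKKS: the relinearized product
decrypts to `m₁·m₂` plus a noise term bounded by `B·B₂ + B·B₁ + B₁·B₂ + D·E`. -/
theorem binary_ckks_mult_noise (R : Type*) [SeminormedCommRing R]
    (s b₁ a₁ m₁ e₁ b₂ a₂ m₂ e₂ b₀ a₀ e_ev : R)
    (B₁ B₂ B D E : ℝ)
    (hB₁' : 0 ≤ B₁) (hB₂' : 0 ≤ B₂) (hB' : 0 ≤ B) (hD' : 0 ≤ D) (hE' : 0 ≤ E)
    (h₁ : b₁ + a₁ * s = m₁ + e₁) (h₂ : b₂ + a₂ * s = m₂ + e₂)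
    (hB₁ : ‖e₁‖ ≤ B₁) (hB₂ : ‖e₂‖ ≤ B₂)
    (hm₁ : ‖m₁‖ ≤ B) (hm₂ : ‖m₂‖ ≤ B)
    (hevk : b₀ + a₀ * s = s ^ 2 + e_ev)
    (hE : ‖e_ev‖ ≤ E) (hD : ‖a₁ * a₂‖ ≤ D)
    (w : R)
    (hw : w = (b₁ * b₂ + (a₁ * a₂) * b₀) + (a₁ * b₂ + a₂ * b₁ + (a₁ * a₂) * a₀) * s) :
    w = m₁ * m₂ + (m₁ * e₂ + m₂ * e₁ + e₁ * e₂ + (a₁ * a₂) * e_ev) ∧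
    ‖m₁ * e₂ + m₂ * e₁ + e₁ * e₂ + (a₁ * a₂) * e_ev‖ ≤ B * B₂ + B * B₁ + B₁ * B₂ + D * E := by
  constructor
  · rw [hw]
    linear_combination (b₂ + a₂ * s) * h₁ + (m₁ + e₁) * h₂ + (a₁ * a₂) * hevk
  · calc ‖m₁ * e₂ + m₂ * e₁ + e₁ * e₂ + (a₁ * a₂) * e_ev‖
        ≤ ‖m₁ * e₂ + m₂ * e₁ + e₁ * e₂‖ + ‖(a₁ * a₂) * e_ev‖ := norm_add_le _ _
      _ ≤ ‖m₁ * e₂ + m₂ * e₁‖ + ‖e₁ * e₂‖ + ‖(a₁ * a₂) * e_ev‖ := by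
          gcongr; exact norm_add_le _ _
      _ ≤ ‖m₁ * e₂‖ + ‖m₂ * e₁‖ + ‖e₁ * e₂‖ + ‖(a₁ * a₂) * e_ev‖ := by
          gcongr; exact norm_add_le _ _
      _ ≤ ‖m₁‖ * ‖e₂‖ + ‖m₂‖ * ‖e₁‖ + ‖e₁‖ * ‖e₂‖ + ‖a₁ * a₂‖ * ‖e_ev‖ := by
          gcongr <;> exact norm_mul_le _ _
      _ ≤ B * B₂ + B * B₁ + B₁ * B₂ + D * E := by
          gcongr <;> first | exact (norm_nonneg _).trans ‹_› | assumption
end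

section
/- Let h, σ, N, q, B_enc, Δ, P be real numbers with h ≥ 0, σ ≥ 0, N ≥ 0, q ≥ 0, P > 0, B_enc > 0. If Δ > 4·h + h·B_enc + 6·σ·N / B_enc, then B_enc² + 2·B_enc·(Δ/2 + h) + h·B_enc² + 2·h·B_enc + 6·σ·N < 2·Δ·B_enc + B_enc² + (8·σ·N / (√3 · P))·q + N + (8/3)·√h. In other words, the Binary CKKS worst-case multiplicative noise bound B_mult^bin = B₁B₂ + (B₁+B₂)(B+h) + hB₁B₂ + h(B₁+B₂) + 6σN is strictly smaller than the standard CKKS bound B_mult^std = ν₁B₂ + ν₂B₁ + B₁B₂ + P⁻¹·q·8σN/√3 + N + (8/3)√h, when instantiated with B₁ = B₂ = B_enc, ν₁ = ν₂ = Δ, and B = Δ/2. -/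
/-- The Binary CKKS worst-case multiplicative noise bound is strictly smaller
than the standard CKKS bound whenever `Δ > 4h + h·B_enc + 6σN/B_enc`. -/
theorem binary_vs_standard_mult_noise
    (h σ N q B_enc Δ P : ℝ)
    (hh : 0 ≤ h) (hσ : 0 ≤ σ) (hN : 0 ≤ N) (hq : 0 ≤ q)
    (hP : 0 < P) (hB : 0 < B_enc)
    (hΔ : Δ > 4 * h + h * B_enc + 6 * σ * N / B_enc) :
    B_enc ^ 2 + 2 * B_enc * (Δ / 2 + h) + h * B_enc ^ 2 + 2 * h * B_enc + 6 * σ * N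
      < 2 * Δ * B_enc + B_enc ^ 2 + (8 * σ * N / (Real.sqrt 3 * P)) * q + N
        + (8 / 3) * Real.sqrt h := by
  have h1 : 0 ≤ Real.sqrt h := Real.sqrt_nonneg h
  have h2 : 0 < Real.sqrt 3 := Real.sqrt_pos.mpr (by norm_num)
  have h3 : 0 ≤ (8 * σ * N / (Real.sqrt 3 * P)) * q := by positivity
  have h4 : 6 * σ * N / B_enc * B_enc = 6 * σ * N := by field_simp
  nlinarith [mul_lt_mul_of_pos_right hΔ hB]
end

section
/- Let a : ℕ → ℝ be a coefficient sequence, Q ≥ 0 and m real with |m| ≤ Q, and suppose the series ∑ |a j|·Q^j is summable. Let D : ℕ, ε ≥ 0, and assume the tail bound ∑'_{j} |a (D+1+j)|·Q^(D+1+j) ≤ ε. Let B_enc ≥ 0 and let y : ℕ → ℝ satisfy |y j − m^j| ≤ B_enc for all j ≤ D (approximately computed powers). Then the series f(m) = ∑'_{j} a j · m^j converges, and |∑_{j=0}^{D} a j · y j − f(m)| ≤ (∑_{j=0}^{D} |a j|) · B_enc + ε. -/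
set_option maxHeartbeats 1000000 in
/-- Accuracy of homomorphic evaluation of an analytic function: truncation at
degree `D` with tail error `ε` and per-power error `B_enc` yields total error
at most `(Σ_{j≤D} |a j|)·B_enc + ε`. -/
theorem analytic_eval_accuracy
    (a : ℕ → ℝ) (Q m : ℝ) (hQ : 0 ≤ Q) (hm : |m| ≤ Q)
    (hsum : Summable (fun j : ℕ => |a j| * Q ^ j))
    (D : ℕ) (ε : ℝ) (hε : 0 ≤ ε)
    (htail : (∑' j : ℕ, |a (D + 1 + j)| * Q ^ (D + 1 + j)) ≤ ε)
    (B_enc : ℝ) (hB : 0 ≤ B_enc)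
    (y : ℕ → ℝ) (hy : ∀ j ≤ D, |y j - m ^ j| ≤ B_enc) :
    Summable (fun j : ℕ => a j * m ^ j) ∧
    |(∑ j ∈ Finset.range (D + 1), a j * y j) - ∑' j : ℕ, a j * m ^ j|
      ≤ (∑ j ∈ Finset.range (D + 1), |a j|) * B_enc + ε := by
  have hbound : ∀ j : ℕ, |a j * m ^ j| ≤ |a j| * Q ^ j := by
    intro j
    rw [abs_mul]
    exact mul_le_mul_of_nonneg_left
      ((abs_pow m j).symm ▸ pow_le_pow_left₀ (abs_nonneg m) hm j) (abs_nonneg _)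
  have hS : Summable (fun j : ℕ => a j * m ^ j) :=
    Summable.of_abs (hsum.of_nonneg_of_le (fun j => abs_nonneg _) hbound)
  refine ⟨hS, ?_⟩
  have hsplit := Summable.sum_add_tsum_nat_add (D + 1) hS
  have hS1 : Summable (fun j : ℕ => a (j + (D + 1)) * m ^ (j + (D + 1))) :=
    hS.comp_injective (add_left_injective (D + 1))
  have hS2 : Summable (fun j : ℕ => |a (j + (D + 1)) * m ^ (j + (D + 1))|) := hS1.abs
  have hS3 : Summable (fun j : ℕ => |a (j + (D + 1))| * Q ^ (j + (D + 1))) :=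
    hsum.comp_injective (add_left_injective (D + 1))
  have htail' : |∑' j : ℕ, a (j + (D + 1)) * m ^ (j + (D + 1))| ≤ ε := by
    calc |∑' j : ℕ, a (j + (D + 1)) * m ^ (j + (D + 1))|
        ≤ ∑' j : ℕ, |a (j + (D + 1)) * m ^ (j + (D + 1))| := by
          simpa only [Real.norm_eq_abs] using
            norm_tsum_le_tsum_norm (f := fun j => a (j + (D + 1)) * m ^ (j + (D + 1)))
              (by simpa only [Real.norm_eq_abs] using hS2)
      _ ≤ ∑' j : ℕ, |a (j + (D + 1))| * Q ^ (j + (D + 1)) := by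
          exact Summable.tsum_le_tsum (fun j => hbound _) hS2 hS3
      _ = ∑' j : ℕ, |a (D + 1 + j)| * Q ^ (D + 1 + j) := by
          congr 1; ext j; rw [Nat.add_comm]
      _ ≤ ε := htail
  calc |(∑ j ∈ Finset.range (D + 1), a j * y j) - ∑' j : ℕ, a j * m ^ j|
      = |(∑ j ∈ Finset.range (D + 1), a j * (y j - m ^ j))
          - ∑' j : ℕ, a (j + (D + 1)) * m ^ (j + (D + 1))| := by
        rw [← hsplit]
        congr 1
        simp only [mul_sub, Finset.sum_sub_distrib]
        ring
    _ ≤ |∑ j ∈ Finset.range (D + 1), a j * (y j - m ^ j)|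
        + |∑' j : ℕ, a (j + (D + 1)) * m ^ (j + (D + 1))| := abs_sub _ _
    _ ≤ (∑ j ∈ Finset.range (D + 1), |a j|) * B_enc + ε := by
        gcongr
        calc |∑ j ∈ Finset.range (D + 1), a j * (y j - m ^ j)|
            ≤ ∑ j ∈ Finset.range (D + 1), |a j * (y j - m ^ j)| :=
              Finset.abs_sum_le_sum_abs _ _
          _ ≤ ∑ j ∈ Finset.range (D + 1), |a j| * B_enc := by
              apply Finset.sum_le_sum
              intro j hj
              rw [abs_mul]
              exact mul_le_mul_of_nonneg_left
                (hy j (Nat.lt_succ_iff.mp (Finset.mem_range.mp hj))) (abs_nonneg _)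
          _ = (∑ j ∈ Finset.range (D + 1), |a j|) * B_enc :=
              (Finset.sum_mul _ _ _).symm
end
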